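/- Let M be a positive integer, and for 1 ≤ i, j ≤ M let ω_i > 0, q_{ij} ∈ ℝ with q_{ii} = 0, and τ_{ij} > 0 for i ≠ j. Define D(x) := diag(ω_i^{-2} x² + 1)_{i=1}^M and Q(x) := (q_{ij} e^{−x τ_{ij}})_{i,j=1}^M for x ∈ ℝ. Then det(D(x) + x² Q(x)) / ∏_{i=1}^M (ω_i^{-2} x² + 1) → 1 as x → +∞ along the real axis. -/

import Mathlib

/-- Along the positive real axis, the characteristic determinant of the
delayed bubble interaction pencil is asymptotic to the product of the
diagonal Minnaert factors:
`det(D(x) + x² Q(x)) / ∏ᵢ (ωᵢ⁻² x² + 1) → 1` as `x → +∞`. -/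
theorem characteristic_determinant_asymptotic
    (M : ℕ) (hM : 0 < M)
    (ω : Fin M → ℝ) (hω : ∀ i, 0 < ω i)
    (q : Fin M → Fin M → ℝ) (hqdiag : ∀ i, q i i = 0)
    (τ : Fin M → Fin M → ℝ) (hτ : ∀ i j, i ≠ j → 0 < τ i j) :
    Filter.Tendsto (fun x : ℝ =>
      (Matrix.diagonal (fun i => (ω i)⁻¹ ^ 2 * x ^ 2 + 1) +
        x ^ 2 • Matrix.of (fun i j => q i j * Real.exp (-x * τ i j))).det /
        ∏ i, ((ω i)⁻¹ ^ 2 * x ^ 2 + 1))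
      Filter.atTop (nhds 1) := by
  set d : ℝ → Fin M → ℝ := fun x i => (ω i)⁻¹ ^ 2 * x ^ 2 + 1 with hd
  have hd1 : ∀ x i, (1 : ℝ) ≤ d x i := by
    intro x i
    have : (0:ℝ) ≤ (ω i)⁻¹ ^ 2 * x ^ 2 := by positivity
    simp only [hd]; linarith
  have hdne : ∀ x i, d x i ≠ 0 := fun x i => by
    have := hd1 x i; linarith
  set A : ℝ → Matrix (Fin M) (Fin M) ℝ := fun x =>
    Matrix.of fun i j => x ^ 2 * (q i j * Real.exp (-x * τ i j)) / d x i with hA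
  -- factorization
  have hfact : ∀ x : ℝ,
      (Matrix.diagonal (fun i => (ω i)⁻¹ ^ 2 * x ^ 2 + 1) +
        x ^ 2 • Matrix.of (fun i j => q i j * Real.exp (-x * τ i j)))
      = Matrix.diagonal (d x) * (1 + A x) := by
    intro x
    ext i j
    rw [Matrix.diagonal_mul]
    by_cases hij : i = j
    · subst hij
      simp [hA, hqdiag i, Matrix.diagonal_apply_eq, Matrix.one_apply_eq, hd]
    · simp only [Matrix.add_apply, Matrix.diagonal_apply_ne _ hij,
        Matrix.one_apply_ne hij, Matrix.smul_apply, Matrix.of_apply, hA,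
        smul_eq_mul, zero_add]
      rw [mul_div_assoc']
      rw [mul_div_cancel_left₀ _ (hdne x i)]
  -- the quotient equals det (1 + A x)
  have heq : ∀ x : ℝ,
      (Matrix.diagonal (fun i => (ω i)⁻¹ ^ 2 * x ^ 2 + 1) +
        x ^ 2 • Matrix.of (fun i j => q i j * Real.exp (-x * τ i j))).det /
        ∏ i, ((ω i)⁻¹ ^ 2 * x ^ 2 + 1) = (1 + A x).det := by
    intro x
    rw [hfact x, Matrix.det_mul, Matrix.det_diagonal]
    have hprod : (∏ i, d x i) ≠ 0 := Finset.prod_ne_zero_iff.2 fun i _ => hdne x i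
    rw [show (∏ i, ((ω i)⁻¹ ^ 2 * x ^ 2 + 1)) = ∏ i, d x i from rfl]
    exact mul_div_cancel_left₀ _ hprod
  simp only [heq]
  -- A → 0
  have hA0 : Filter.Tendsto A Filter.atTop (nhds 0) := by
    rw [show (0 : Matrix (Fin M) (Fin M) ℝ) = fun _ _ => (0:ℝ) from rfl]
    refine tendsto_pi_nhds.2 ?_
    intro i
    rw [tendsto_pi_nhds]
    intro j
    by_cases hij : i = j
    · subst hij
      simpa [hA, hqdiag i] using (tendsto_const_nhds : Filter.Tendsto
        (fun _ : ℝ => (0:ℝ)) Filter.atTop (nhds 0))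
    · have hc : 0 < τ i j := hτ i j hij
      have hg : Filter.Tendsto (fun x : ℝ => |q i j| * (x ^ 2 * Real.exp (-x * τ i j)))
          Filter.atTop (nhds 0) := by
        have hcomp : Filter.Tendsto (fun x : ℝ => τ i j * x) Filter.atTop Filter.atTop :=
          Filter.tendsto_id.const_mul_atTop hc
        have h1 : Filter.Tendsto (fun x : ℝ => (τ i j * x) ^ 2 * Real.exp (-(τ i j * x)))
            Filter.atTop (nhds 0) :=
          (Real.tendsto_pow_mul_exp_neg_atTop_nhds_zero 2).comp hcomp
        have h2 := h1.const_mul (|q i j| / (τ i j) ^ 2)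
        rw [mul_zero] at h2
        refine h2.congr fun x => ?_
        have hexp : Real.exp (-(τ i j * x)) = Real.exp (-x * τ i j) :=
          congrArg Real.exp (by ring)
        rw [hexp]
        field_simp
      refine squeeze_zero_norm (fun x => ?_) hg
      have hdx : (0:ℝ) < d x i := lt_of_lt_of_le one_pos (hd1 x i)
      rw [Real.norm_eq_abs, hA]
      simp only [Matrix.of_apply]
      rw [abs_div, abs_of_pos hdx]
      calc |x ^ 2 * (q i j * Real.exp (-x * τ i j))| / d x i
          ≤ |x ^ 2 * (q i j * Real.exp (-x * τ i j))| :=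
            div_le_self (abs_nonneg _) (hd1 x i)
        _ = |q i j| * (x ^ 2 * Real.exp (-x * τ i j)) := by
            rw [abs_mul, abs_mul, abs_pow, sq_abs,
              abs_of_pos (Real.exp_pos _)]
            ring
  have h1A : Filter.Tendsto (fun x => (1 : Matrix (Fin M) (Fin M) ℝ) + A x)
      Filter.atTop (nhds 1) := by
    have := (tendsto_const_nhds (x := (1 : Matrix (Fin M) (Fin M) ℝ))
      (f := Filter.atTop (α := ℝ))).add hA0
    simpa using this
  have hdet : Filter.Tendsto (fun x => (1 + A x).det) Filter.atTop (nhds 1) := by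
    have := (Continuous.matrix_det (continuous_id (X := Matrix (Fin M) (Fin M) ℝ))).tendsto
      (1 : Matrix (Fin M) (Fin M) ℝ)
    simpa [Function.comp_def] using this.comp h1A
  exact hdet
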